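/- arXiv:1610.07534 — 5 statements merged into one kernel-verified Lean document; each statement's English description precedes it below -/
import Mathlib

section
/- Let g be a Lie algebra over a field K, let n be a natural number, and let E, F, H : Fin n → g and A : Fin n → Fin n → K satisfy ⁅E i, F j⁆ = (if i = j then H i else 0), ⁅H i, E j⁆ = A i j • E j, and ⁅H i, F j⁆ = −(A i j) • F j for all i, j. Suppose x : Fin n → K satisfies Σᵢ x i * A i j = 1 for every j. Define ρ = Σᵢ x i • H i, I₊ = Σᵢ E i, and I₋ = 2 • Σᵢ x i • F i. Then ⁅ρ, I₊⁆ = I₊, ⁅ρ, I₋⁆ = −I₋, and ⁅I₊, I₋⁆ = 2 • ρ; in other words (2•ρ, I₊, I₋) is an sl₂-triple in g. -/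

private lemma lie_sum' {g : Type*} [LieRing g] {n : ℕ} (x : g) (f : Fin n → g) :
    ⁅x, ∑ i, f i⁆ = ∑ i, ⁅x, f i⁆ :=
  map_sum (AddMonoidHom.mk' (fun m => ⁅x, m⁆) (lie_add x)) f Finset.univ

private lemma sum_lie' {g : Type*} [LieRing g] {n : ℕ} (f : Fin n → g) (x : g) :
    ⁅∑ i, f i, x⁆ = ∑ i, ⁅f i, x⁆ :=
  map_sum (AddMonoidHom.mk' (fun m => ⁅m, x⁆) (fun a b => add_lie a b x)) f Finset.univ

/-- If `E F H : Fin n → g` satisfy the Weyl-generator relations for a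
Cartan matrix `A`, and `x : Fin n → K` satisfies `∑ i, x i * A i j = 1` for all `j`, then
with `ρ = ∑ i, x i • H i`, `I₊ = ∑ i, E i`, `I₋ = 2 • ∑ i, x i • F i` one has
`⁅ρ, I₊⁆ = I₊`, `⁅ρ, I₋⁆ = -I₋` and `⁅I₊, I₋⁆ = 2 • ρ`, i.e. `(2•ρ, I₊, I₋)` is a
principal `sl₂`-triple. -/
theorem principal_sl2_triple
    {K g : Type*} [Field K] [LieRing g] [LieAlgebra K g] (n : ℕ)
    (E F H : Fin n → g) (A : Fin n → Fin n → K)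
    (hEF : ∀ i j, ⁅E i, F j⁆ = if i = j then H i else 0)
    (hHE : ∀ i j, ⁅H i, E j⁆ = A i j • E j)
    (hHF : ∀ i j, ⁅H i, F j⁆ = -(A i j) • F j)
    (x : Fin n → K) (hx : ∀ j, ∑ i, x i * A i j = 1) :
    ⁅∑ i, x i • H i, ∑ i, E i⁆ = ∑ i, E i ∧
    ⁅∑ i, x i • H i, 2 • ∑ i, x i • F i⁆ = -(2 • ∑ i, x i • F i) ∧
    ⁅∑ i, E i, 2 • ∑ i, x i • F i⁆ = 2 • ∑ i, x i • H i := by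
  have key1 : ∀ j, ⁅∑ i, x i • H i, E j⁆ = E j := fun j => by
    rw [sum_lie']
    calc ∑ i, ⁅x i • H i, E j⁆
        = ∑ i, (x i * A i j) • E j := by
          refine Finset.sum_congr rfl fun i _ => ?_
          rw [smul_lie, hHE, smul_smul]
      _ = E j := by rw [← Finset.sum_smul, hx, one_smul]
  have key2 : ∀ j, ⁅∑ i, x i • H i, F j⁆ = -F j := fun j => by
    rw [sum_lie']
    calc ∑ i, ⁅x i • H i, F j⁆
        = ∑ i, (x i * A i j) • (-F j) := by
          refine Finset.sum_congr rfl fun i _ => ?_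
          rw [smul_lie, hHF, smul_smul, smul_neg, mul_neg, neg_smul]
      _ = -F j := by rw [← Finset.sum_smul, hx, one_smul]
  refine ⟨?_, ?_, ?_⟩
  · rw [lie_sum']
    exact Finset.sum_congr rfl fun j _ => key1 j
  · rw [lie_nsmul, lie_sum', ← smul_neg, ← Finset.sum_neg_distrib]
    congr 1
    refine Finset.sum_congr rfl fun j _ => ?_
    rw [lie_smul, key2, smul_neg]
  · rw [lie_nsmul, sum_lie']
    congr 1
    rw [Finset.sum_congr rfl fun i _ => lie_sum' (E i) _, Finset.sum_comm]
    refine Finset.sum_congr rfl fun j _ => ?_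
    calc ∑ i, ⁅E i, x j • F j⁆
        = ∑ i, x j • (if i = j then H i else 0) := by
          refine Finset.sum_congr rfl fun i _ => by rw [lie_smul, hEF]
      _ = x j • H j := by rw [Finset.sum_eq_single j] <;> simp_all
end

section
/- Let L be a Lie algebra over a commutative ring that is the internal direct sum of two Lie subalgebras L₊ and L₋ (every element of L is uniquely the sum of an element of L₊ and an element of L₋, and both L₊ and L₋ are closed under the bracket), and let π : L → L be the linear projection onto L₊ with kernel L₋. Then for any P, Q ∈ L with ⁅P, Q⁆ = 0 one has π⁅π Q, P⁆ − π⁅π P, Q⁆ + ⁅π P, π Q⁆ = 0. -/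
/-- Let `L` be a Lie algebra over a commutative ring which is the internal
direct sum of two Lie subalgebras `p = L₊` and `q = L₋` (i.e. the underlying submodules are
complementary), and let `π : L → L` be the linear projection onto `L₊` along `L₋`
(characterised by: `π` takes values in `L₊`, is the identity on `L₊`, and vanishes exactly
on `L₋`).  Then for any `P Q : L` with `⁅P, Q⁆ = 0` one has
`π ⁅π Q, P⁆ - π ⁅π P, Q⁆ + ⁅π P, π Q⁆ = 0`. -/
theorem zero_curvature_projection
    {R L : Type*} [CommRing R] [LieRing L] [LieAlgebra R L]
    (p q : LieSubalgebra R L)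
    (hcompl : IsCompl p.toSubmodule q.toSubmodule)
    (π : L →ₗ[R] L)
    (hmem : ∀ x, π x ∈ p)
    (hid : ∀ x ∈ p, π x = x)
    (hker : ∀ x, π x = 0 ↔ x ∈ q)
    (P Q : L) (hPQ : ⁅P, Q⁆ = 0) :
    π ⁅π Q, P⁆ - π ⁅π P, Q⁆ + ⁅π P, π Q⁆ = 0 := by
  have hPm : P - π P ∈ q := by
    rw [← hker]
    have := hid (π P) (hmem P)
    simp [map_sub, this]
  have hQm : Q - π Q ∈ q := by
    rw [← hker]
    have := hid (π Q) (hmem Q)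
    simp [map_sub, this]
  -- expand ⁅P,Q⁆
  have key : ⁅π P, π Q⁆ + ⁅π P, Q - π Q⁆ + ⁅P - π P, π Q⁆ + ⁅P - π P, Q - π Q⁆ = 0 := by
    have hP : π P + (P - π P) = P := by abel
    have hQ : π Q + (Q - π Q) = Q := by abel
    have h : ⁅π P + (P - π P), π Q + (Q - π Q)⁆ = 0 := by rw [hP, hQ]; exact hPQ
    rw [lie_add, add_lie, add_lie] at h
    linear_combination (norm := abel) h
  have hqq : π ⁅P - π P, Q - π Q⁆ = 0 := (hker _).mpr (q.lie_mem hPm hQm)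
  have hpp : π ⁅π P, π Q⁆ = ⁅π P, π Q⁆ := hid _ (p.lie_mem (hmem P) (hmem Q))
  have key2 : ⁅π P, π Q⁆ + π ⁅π P, Q - π Q⁆ + π ⁅P - π P, π Q⁆ = 0 := by
    have h := congrArg π key
    rw [map_add, map_add, map_add, hqq, hpp, add_zero, map_zero] at h
    exact h
  -- rewrite goal
  have e1 : π ⁅π Q, P⁆ = ⁅π Q, π P⁆ + π ⁅π Q, P - π P⁆ := by
    have : ⁅π Q, P⁆ = ⁅π Q, π P⁆ + ⁅π Q, P - π P⁆ := by rw [← lie_add]; norm_num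
    rw [this, map_add, hid _ (p.lie_mem (hmem Q) (hmem P))]
  have e2 : π ⁅π P, Q⁆ = ⁅π P, π Q⁆ + π ⁅π P, Q - π Q⁆ := by
    have : ⁅π P, Q⁆ = ⁅π P, π Q⁆ + ⁅π P, Q - π Q⁆ := by rw [← lie_add]; norm_num
    rw [this, map_add, hid _ (p.lie_mem (hmem P) (hmem Q))]
  have e3 : π ⁅π Q, P - π P⁆ = - π ⁅P - π P, π Q⁆ := by
    rw [← map_neg, lie_skew]
  have e4 : ⁅π Q, π P⁆ = -⁅π P, π Q⁆ := by rw [← lie_skew]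
  rw [e1, e2, e3, e4]
  linear_combination (norm := abel) -key2
end

section
/- Let g be a real Lie algebra whose underlying vector space is a finite-dimensional normed real vector space, and let B be an invariant bilinear form on g. Let A, R, S : ℝ × ℝ → g (with coordinates written (x, λ)), where R and A are continuously differentiable and S is twice continuously differentiable. Suppose that for all (x, λ): ∂R/∂x (x,λ) = ⁅R(x,λ), A(x,λ)⁆, ∂S/∂x (x,λ) = ⁅S(x,λ), A(x,λ)⁆, and ⁅R(x,λ), S(x,λ)⁆ = 0. Then for each fixed λ, the function x ↦ B(R(x,λ), ∂S/∂λ (x,λ)) is constant in x. -/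
/-- Upgrade a bilinear map on a finite-dimensional space to a continuous bilinear map. -/
noncomputable def LinearMap.toCLM₂ {g h : Type*} [NormedAddCommGroup g] [NormedSpace ℝ g]
    [FiniteDimensional ℝ g] [NormedAddCommGroup h] [NormedSpace ℝ h]
    (L : g →ₗ[ℝ] g →ₗ[ℝ] h) : g →L[ℝ] g →L[ℝ] h :=
  LinearMap.toContinuousLinearMap
    { toFun := fun x => LinearMap.toContinuousLinearMap (L x)
      map_add' := by intro x y; ext z; simp
      map_smul' := by intro c x; ext z; simp }

@[simp] lemma LinearMap.toCLM₂_apply {g h : Type*} [NormedAddCommGroup g] [NormedSpace ℝ g]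
    [FiniteDimensional ℝ g] [NormedAddCommGroup h] [NormedSpace ℝ h]
    (L : g →ₗ[ℝ] g →ₗ[ℝ] h) (x y : g) : L.toCLM₂ x y = L x y := by
  simp [LinearMap.toCLM₂]

/-- Directional derivative along the first coordinate. -/
lemma hasDerivAt_fst_line {g : Type*} [NormedAddCommGroup g] [NormedSpace ℝ g]
    {f : ℝ × ℝ → g} {x l : ℝ} (hf : DifferentiableAt ℝ f (x, l)) :
    HasDerivAt (fun s => f (s, l)) (fderiv ℝ f (x, l) (1, 0)) x := by
  have hcurve : HasDerivAt (fun s : ℝ => (s, l)) ((1 : ℝ), (0 : ℝ)) x :=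
    (hasDerivAt_id x).prodMk (hasDerivAt_const x l)
  exact hf.hasFDerivAt.comp_hasDerivAt x hcurve

/-- Directional derivative along the second coordinate. -/
lemma hasDerivAt_snd_line {g : Type*} [NormedAddCommGroup g] [NormedSpace ℝ g]
    {f : ℝ × ℝ → g} {x l : ℝ} (hf : DifferentiableAt ℝ f (x, l)) :
    HasDerivAt (fun m => f (x, m)) (fderiv ℝ f (x, l) (0, 1)) l := by
  have hcurve : HasDerivAt (fun m : ℝ => (x, m)) ((0 : ℝ), (1 : ℝ)) l :=
    (hasDerivAt_const l x).prodMk (hasDerivAt_id l)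
  exact hf.hasFDerivAt.comp_hasDerivAt l hcurve

/-- Let `g` be a real Lie algebra whose underlying vector space is a
finite-dimensional normed real vector space (Lie bracket encoded by an antisymmetric
bilinear map `L` satisfying the Jacobi identity), and let `B` be an invariant bilinear
form on `g`.  Let `A R S : ℝ × ℝ → g` (coordinates `(x, λ)`) with `A, R` continuously
differentiable and `S` twice continuously differentiable, and suppose that for all
`(x, λ)`:  `∂R/∂x = ⁅R, A⁆`, `∂S/∂x = ⁅S, A⁆` and `⁅R, S⁆ = 0`.  Then for each fixed `λ`
the function `x ↦ B (R (x,λ)) (∂S/∂λ (x,λ))` is constant in `x`. -/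
theorem pairing_resolvent_lambda_deriv_constant
    {g : Type*} [NormedAddCommGroup g] [NormedSpace ℝ g] [FiniteDimensional ℝ g]
    (L : g →ₗ[ℝ] g →ₗ[ℝ] g)
    (hanti : ∀ x y, L x y = - L y x)
    (hjacobi : ∀ x y z, L x (L y z) = L (L x y) z + L y (L x z))
    (B : g →ₗ[ℝ] g →ₗ[ℝ] ℝ)
    (hinv : ∀ x y z, B (L x y) z = B x (L y z))
    (A R S : ℝ × ℝ → g)
    (hA : ContDiff ℝ 1 A) (hR : ContDiff ℝ 1 R) (hS : ContDiff ℝ 2 S)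
    (hReq : ∀ x l, deriv (fun s => R (s, l)) x = L (R (x, l)) (A (x, l)))
    (hSeq : ∀ x l, deriv (fun s => S (s, l)) x = L (S (x, l)) (A (x, l)))
    (hcomm : ∀ x l, L (R (x, l)) (S (x, l)) = 0) :
    ∀ (l x₁ x₂ : ℝ),
      B (R (x₁, l)) (deriv (fun m => S (x₁, m)) l)
        = B (R (x₂, l)) (deriv (fun m => S (x₂, m)) l) := by
  intro l x₁ x₂
  set Lc := L.toCLM₂ with hLc
  set Bc := B.toCLM₂ with hBc
  have hAd : Differentiable ℝ A := hA.differentiable one_ne_zero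
  have hRd : Differentiable ℝ R := hR.differentiable one_ne_zero
  have hSd : Differentiable ℝ S := hS.differentiable two_ne_zero
  -- the second derivative of S and its symmetry
  have hS' : ContDiff ℝ 1 (fderiv ℝ S) := hS.fderiv_right le_rfl
  have hS'd : Differentiable ℝ (fderiv ℝ S) := hS'.differentiable one_ne_zero
  have hsymm : ∀ p : ℝ × ℝ, ∀ v w : ℝ × ℝ,
      fderiv ℝ (fderiv ℝ S) p v w = fderiv ℝ (fderiv ℝ S) p w v := fun p =>
    second_derivative_symmetric (fun y => (hSd y).hasFDerivAt) (hS'd p).hasFDerivAt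
  -- the λ-partial of S as a function G
  set G : ℝ × ℝ → g := fun p => fderiv ℝ S p (0, 1) with hGdef
  have hG : ContDiff ℝ 1 G := hS'.clm_apply contDiff_const
  have hGd : Differentiable ℝ G := hG.differentiable one_ne_zero
  -- the x-partials of R and S in closed form
  have keyR : ∀ p : ℝ × ℝ, fderiv ℝ R p (1, 0) = L (R p) (A p) := by
    rintro ⟨x, m⟩
    rw [← (hasDerivAt_fst_line (hRd (x, m))).deriv, hReq]
  have keyS : ∀ p : ℝ × ℝ, fderiv ℝ S p (1, 0) = L (S p) (A p) := by
    rintro ⟨x, m⟩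
    rw [← (hasDerivAt_fst_line (hSd (x, m))).deriv, hSeq]
  -- derivative of G along x: mix of second derivatives
  have hGline : ∀ x : ℝ, HasDerivAt (fun s => G (s, l))
      (fderiv ℝ (fderiv ℝ S) (x, l) (1, 0) (0, 1)) x := by
    intro x
    have h1 : HasDerivAt (fun s => fderiv ℝ S (s, l))
        (fderiv ℝ (fderiv ℝ S) (x, l) (1, 0)) x := hasDerivAt_fst_line (hS'd (x, l))
    exact (ContinuousLinearMap.apply ℝ g ((0 : ℝ), (1 : ℝ))).hasFDerivAt.comp_hasDerivAt x h1
  -- compute the mixed second derivative using the x-flow equation for S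
  have hmix : ∀ x : ℝ, fderiv ℝ (fderiv ℝ S) (x, l) (1, 0) (0, 1)
      = L (G (x, l)) (A (x, l)) + L (S (x, l)) (fderiv ℝ A (x, l) (0, 1)) := by
    intro x
    -- F' p = fderiv S p (1,0) = L (S p) (A p); differentiate along λ
    have h1 : HasDerivAt (fun m => fderiv ℝ S (x, m))
        (fderiv ℝ (fderiv ℝ S) (x, l) (0, 1)) l := hasDerivAt_snd_line (hS'd (x, l))
    have h2 : HasDerivAt (fun m => fderiv ℝ S (x, m) ((1 : ℝ), (0 : ℝ)))
        (fderiv ℝ (fderiv ℝ S) (x, l) (0, 1) (1, 0)) l :=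
      (ContinuousLinearMap.apply ℝ g ((1 : ℝ), (0 : ℝ))).hasFDerivAt.comp_hasDerivAt l h1
    -- same function in closed form
    have hSl : HasDerivAt (fun m => S (x, m)) (G (x, l)) l := hasDerivAt_snd_line (hSd (x, l))
    have hAl : HasDerivAt (fun m => A (x, m)) (fderiv ℝ A (x, l) (0, 1)) l :=
      hasDerivAt_snd_line (hAd (x, l))
    have hc : HasDerivAt (fun m => Lc (S (x, m))) (Lc (G (x, l))) l :=
      Lc.hasFDerivAt.comp_hasDerivAt l hSl
    have h3 : HasDerivAt (fun m => Lc (S (x, m)) (A (x, m)))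
        (Lc (G (x, l)) (A (x, l)) + Lc (S (x, l)) (fderiv ℝ A (x, l) (0, 1))) l :=
      hc.clm_apply hAl
    have heq : (fun m => fderiv ℝ S (x, m) ((1 : ℝ), (0 : ℝ)))
        = fun m => Lc (S (x, m)) (A (x, m)) := by
      funext m; rw [keyS (x, m)]; simp [hLc]
    rw [heq] at h2
    have := h2.unique h3
    rw [hsymm (x, l) (1, 0) (0, 1), this]
    simp [hLc]
  -- the function whose constancy we prove
  set f : ℝ → ℝ := fun x => Bc (R (x, l)) (G (x, l)) with hf
  have hderiv : ∀ x : ℝ, HasDerivAt f 0 x := by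
    intro x
    have hRl : HasDerivAt (fun s => R (s, l)) (fderiv ℝ R (x, l) (1, 0)) x :=
      hasDerivAt_fst_line (hRd (x, l))
    have hc : HasDerivAt (fun s => Bc (R (s, l))) (Bc (fderiv ℝ R (x, l) (1, 0))) x :=
      Bc.hasFDerivAt.comp_hasDerivAt x hRl
    have hmain : HasDerivAt f
        (Bc (fderiv ℝ R (x, l) (1, 0)) (G (x, l))
          + Bc (R (x, l)) (fderiv ℝ (fderiv ℝ S) (x, l) (1, 0) (0, 1))) x := by
      have := hc.clm_apply (hGline x)
      exact this
    have hzero : Bc (fderiv ℝ R (x, l) (1, 0)) (G (x, l))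
        + Bc (R (x, l)) (fderiv ℝ (fderiv ℝ S) (x, l) (1, 0) (0, 1)) = 0 := by
      rw [keyR (x, l), hmix x]
      simp only [hBc, LinearMap.toCLM₂_apply, map_add]
      rw [hinv (R (x, l)) (A (x, l)) (G (x, l)), hanti (A (x, l)) (G (x, l)),
        ← hinv (R (x, l)) (S (x, l)) (fderiv ℝ A (x, l) (0, 1)), hcomm x l]
      simp
    rw [← hzero]
    exact hmain
  have hconst : f x₁ = f x₂ :=
    is_const_of_deriv_eq_zero (fun x => (hderiv x).differentiableAt)
      (fun x => (hderiv x).deriv) x₁ x₂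
  have hd : ∀ x : ℝ, deriv (fun m => S (x, m)) l = G (x, l) := fun x =>
    (hasDerivAt_snd_line (hSd (x, l))).deriv
  rw [hd x₁, hd x₂]
  simpa [hf, hBc] using hconst
end

section
/- Let g be a Lie algebra over a field K and B a symmetric invariant bilinear form on g. Let ρ, L₁, K₁, L₂, K₂ ∈ g and m, h, c ∈ K with h ≠ 0. Assume ⁅ρ, L₁⁆ = m • L₁, ⁅ρ, K₁⁆ = (m − h) • K₁, ⁅K₁, L₂⁆ + ⁅L₁, K₂⁆ = 0, and B(L₁, K₂) + B(L₂, K₁) = c. Then B(L₁, K₂) = h⁻¹ (h − m) c and B(L₂, K₁) = h⁻¹ m c. -/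
/-- Let `g` be a Lie algebra over a field `K` and `B` a symmetric
invariant bilinear form on `g`.  Let `ρ, L₁, K₁, L₂, K₂ ∈ g` and `m, h, c ∈ K` with
`h ≠ 0`.  Assume `⁅ρ, L₁⁆ = m • L₁`, `⁅ρ, K₁⁆ = (m - h) • K₁`,
`⁅K₁, L₂⁆ + ⁅L₁, K₂⁆ = 0` and `B L₁ K₂ + B L₂ K₁ = c`.  Then
`B L₁ K₂ = h⁻¹ * (h - m) * c` and `B L₂ K₁ = h⁻¹ * m * c`. -/
theorem pairing_L_K_values
    {K g : Type*} [Field K] [LieRing g] [LieAlgebra K g]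
    (B : g →ₗ[K] g →ₗ[K] K)
    (hsym : ∀ x y, B x y = B y x)
    (hinv : ∀ x y z, B ⁅x, y⁆ z = B x ⁅y, z⁆)
    (ρ L₁ K₁ L₂ K₂ : g) (m h c : K) (hh : h ≠ 0)
    (hL₁ : ⁅ρ, L₁⁆ = m • L₁)
    (hK₁ : ⁅ρ, K₁⁆ = (m - h) • K₁)
    (hcomm : ⁅K₁, L₂⁆ + ⁅L₁, K₂⁆ = 0)
    (hc : B L₁ K₂ + B L₂ K₁ = c) :
    B L₁ K₂ = h⁻¹ * (h - m) * c ∧ B L₂ K₁ = h⁻¹ * m * c := by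
  have h1 : B ⁅ρ, L₁⁆ K₂ = B ρ ⁅L₁, K₂⁆ := hinv _ _ _
  have h2 : B ⁅ρ, K₁⁆ L₂ = B ρ ⁅K₁, L₂⁆ := hinv _ _ _
  rw [hL₁] at h1
  rw [hK₁] at h2
  simp only [map_smul, LinearMap.smul_apply, smul_eq_mul] at h1 h2
  have h3 : B ρ ⁅L₁, K₂⁆ + B ρ ⁅K₁, L₂⁆ = 0 := by
    rw [← map_add, add_comm, hcomm, map_zero]
  rw [hsym K₁ L₂] at h2
  have key : m * B L₁ K₂ + (m - h) * B L₂ K₁ = 0 := by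
    rw [h1, h2]; exact h3
  have hy : B L₂ K₁ = h⁻¹ * m * c := by
    field_simp
    linear_combination m * hc - key
  refine ⟨?_, hy⟩
  have hx : B L₁ K₂ = c - B L₂ K₁ := by linear_combination hc
  rw [hx, hy]
  field_simp
end

section
/- Fix n ∈ ℕ. Let A, R, g : ℝ → Matrix (Fin n) (Fin n) ℝ be differentiable functions, with g t invertible for every t, and suppose deriv R t = R t * A t − A t * R t for all t. Define Ã t = g t * A t * (g t)⁻¹ − (deriv g t) * (g t)⁻¹ and R̃ t = g t * R t * (g t)⁻¹. Then deriv R̃ t = R̃ t * Ã t − Ã t * R̃ t for all t. -/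
attribute [local instance] Matrix.normedAddCommGroup Matrix.normedSpace

open Matrix

variable {n : ℕ}

noncomputable def mulCLM (n : ℕ) :
    Matrix (Fin n) (Fin n) ℝ →L[ℝ] Matrix (Fin n) (Fin n) ℝ →L[ℝ] Matrix (Fin n) (Fin n) ℝ :=
  LinearMap.toContinuousLinearMap <|
    (LinearMap.toContinuousLinearMap.toLinearMap).comp (LinearMap.mul ℝ _)

@[simp] lemma mulCLM_apply (a b : Matrix (Fin n) (Fin n) ℝ) : mulCLM n a b = a * b := rfl

lemma HasDerivAt.matMul {f h : ℝ → Matrix (Fin n) (Fin n) ℝ} {f' h' : Matrix (Fin n) (Fin n) ℝ}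
    {t : ℝ} (hf : HasDerivAt f f' t) (hh : HasDerivAt h h' t) :
    HasDerivAt (fun s => f s * h s) (f' * h t + f t * h') t := by
  refine hasDerivAt_pi.mpr fun i => hasDerivAt_pi.mpr fun j => ?_
  simp only [Matrix.mul_apply, Matrix.add_apply]
  rw [← Finset.sum_add_distrib]
  apply HasDerivAt.fun_sum
  intro k _
  exact (hasDerivAt_pi.mp (hasDerivAt_pi.mp hf i) k).mul (hasDerivAt_pi.mp (hasDerivAt_pi.mp hh k) j)

lemma diff_entry {f : ℝ → Matrix (Fin n) (Fin n) ℝ} (hf : Differentiable ℝ f) (i j : Fin n) :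
    Differentiable ℝ fun s => f s i j :=
  differentiable_pi.mp (differentiable_pi.mp hf i) j

lemma diff_det {f : ℝ → Matrix (Fin n) (Fin n) ℝ}
    (h : ∀ i j, Differentiable ℝ fun s => f s i j) :
    Differentiable ℝ fun s => (f s).det := by
  simp only [Matrix.det_apply']
  apply Differentiable.fun_sum
  intro σ _
  apply Differentiable.const_mul
  apply Differentiable.fun_finsetProd
  intro i _
  exact h (σ i) i

lemma diff_inv {g : ℝ → Matrix (Fin n) (Fin n) ℝ} (hg : Differentiable ℝ g)
    (hunit : ∀ t, IsUnit (g t)) :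
    Differentiable ℝ fun s => (g s)⁻¹ := by
  have hdet : Differentiable ℝ fun s => (g s).det := diff_det (diff_entry hg)
  have hdetne : ∀ s, (g s).det ≠ 0 := fun s =>
    IsUnit.ne_zero ((Matrix.isUnit_iff_isUnit_det _).mp (hunit s))
  have hadj : Differentiable ℝ fun s => (g s).adjugate := by
    refine differentiable_pi.mpr ?_; intro i
    refine differentiable_pi.mpr ?_; intro j
    simp only [Matrix.adjugate_apply]
    apply diff_det
    intro k l
    simp only [Matrix.updateRow_apply]
    by_cases hk : k = j <;> simp [hk, diff_entry hg]
  have : (fun s => (g s)⁻¹) = fun s => ((g s).det)⁻¹ • (g s).adjugate := by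
    funext s
    rw [Matrix.inv_def, Ring.inverse_eq_inv']
  rw [this]
  exact (hdet.inv hdetne).smul hadj

lemma hasDerivAt_inv' {g : ℝ → Matrix (Fin n) (Fin n) ℝ} (hg : Differentiable ℝ g)
    (hunit : ∀ t, IsUnit (g t)) (t : ℝ) :
    HasDerivAt (fun s => (g s)⁻¹) (-((g t)⁻¹ * deriv g t * (g t)⁻¹)) t := by
  have hi : Differentiable ℝ fun s => (g s)⁻¹ := diff_inv hg hunit
  have hdi : HasDerivAt (fun s => (g s)⁻¹) (deriv (fun s => (g s)⁻¹) t) t :=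
    (hi t).hasDerivAt
  have hprod : HasDerivAt (fun s => (g s)⁻¹ * g s)
      (deriv (fun s => (g s)⁻¹) t * g t + (g t)⁻¹ * deriv g t) t :=
    hdi.matMul (hg t).hasDerivAt
  have hone : (fun s => (g s)⁻¹ * g s) = fun _ => (1 : Matrix (Fin n) (Fin n) ℝ) := by
    funext s; exact Matrix.nonsing_inv_mul _ ((Matrix.isUnit_iff_isUnit_det _).mp (hunit s))
  rw [hone] at hprod
  have h0 : deriv (fun s => (g s)⁻¹) t * g t + (g t)⁻¹ * deriv g t = 0 :=
    hprod.unique (hasDerivAt_const t 1)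
  have key : deriv (fun s => (g s)⁻¹) t = -((g t)⁻¹ * deriv g t * (g t)⁻¹) := by
    have h1 : deriv (fun s => (g s)⁻¹) t * g t = -((g t)⁻¹ * deriv g t) := by
      linear_combination (norm := abel) h0
    calc deriv (fun s => (g s)⁻¹) t
        = deriv (fun s => (g s)⁻¹) t * g t * (g t)⁻¹ := by
          rw [Matrix.mul_nonsing_inv_cancel_right _ _
            ((Matrix.isUnit_iff_isUnit_det _).mp (hunit t))]
      _ = -((g t)⁻¹ * deriv g t * (g t)⁻¹) := by rw [h1, neg_mul]
  rwa [key] at hdi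

/-- Let `A R g : ℝ → Matrix (Fin n) (Fin n) ℝ` be differentiable, with
`g t` invertible for every `t`, and suppose `deriv R t = R t * A t - A t * R t` for all
`t`.  With `Ã t = g t * A t * (g t)⁻¹ - (deriv g t) * (g t)⁻¹` and
`R̃ t = g t * R t * (g t)⁻¹` one has `deriv R̃ t = R̃ t * Ã t - Ã t * R̃ t` for all `t`:
the gauge transform of a resolvent is a resolvent of the gauge-transformed Lax operator. -/
theorem gauge_transform_of_resolvent
    {n : ℕ} (A R g : ℝ → Matrix (Fin n) (Fin n) ℝ)
    (hA : Differentiable ℝ A) (hR : Differentiable ℝ R) (hg : Differentiable ℝ g)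
    (hunit : ∀ t, IsUnit (g t))
    (hlax : ∀ t, deriv R t = R t * A t - A t * R t) :
    ∀ t : ℝ,
      deriv (fun s => g s * R s * (g s)⁻¹) t
        = (g t * R t * (g t)⁻¹) * (g t * A t * (g t)⁻¹ - deriv g t * (g t)⁻¹)
          - (g t * A t * (g t)⁻¹ - deriv g t * (g t)⁻¹) * (g t * R t * (g t)⁻¹) := by
  intro t
  have hinv_t : (g t)⁻¹ * g t = 1 :=
    Matrix.nonsing_inv_mul _ ((Matrix.isUnit_iff_isUnit_det _).mp (hunit t))
  have hD : HasDerivAt (fun s => g s * R s * (g s)⁻¹)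
      ((deriv g t * R t + g t * deriv R t) * (g t)⁻¹
        + (g t * R t) * (-((g t)⁻¹ * deriv g t * (g t)⁻¹))) t :=
    ((hg t).hasDerivAt.matMul (hR t).hasDerivAt).matMul (hasDerivAt_inv' hg hunit t)
  rw [show deriv (fun s => g s * R s * (g s)⁻¹) t = _ from hD.deriv, hlax t]
  simp only [Matrix.mul_assoc, Matrix.mul_sub, Matrix.sub_mul, Matrix.mul_add,
    Matrix.add_mul, mul_neg, Matrix.mul_one, hinv_t]
  have hcl : ∀ X : Matrix (Fin n) (Fin n) ℝ, (g t)⁻¹ * (g t * X) = X := fun X =>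
    Matrix.nonsing_inv_mul_cancel_left _ _ ((Matrix.isUnit_iff_isUnit_det _).mp (hunit t))
  simp only [hcl]
  abel
end
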